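/- For integers k ≥ 0 and n ≥ l ≥ k+1, the number op_{n,k,=l}^{k+1} of ordered preference sets (a_1,…,a_n) of length n with exactly k flaws, leading term a_1 = k+1, and max{a_i : 1 ≤ i ≤ n} = l, satisfies (n+l−k−1) · op_{n,k,=l}^{k+1} = (n−l+k+1) · C(n+l−k−1, l−k−1). -/

import Mathlib

/-- The first unoccupied parking space `j` with `p ≤ j ≤ n`, if any. -/
def firstFree (n : ℕ) (occ : Finset ℕ) (p : ℕ) : Option ℕ :=
  (List.range' p (n + 1 - p)).find? (fun j => decide (j ∉ occ))

/-- Number of cars that fail to park, processing the preference list in order,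
given the set of already occupied spaces. -/
def flawsFrom (n : ℕ) : List ℕ → Finset ℕ → ℕ
  | [], _ => 0
  | p :: rest, occ =>
    match firstFree n occ p with
    | none => flawsFrom n rest occ + 1
    | some j => flawsFrom n rest (insert j occ)

/-- The number of flaws (unparked cars) of a preference list of length `n`. -/
def flaws (n : ℕ) (a : List ℕ) : ℕ := flawsFrom n a ∅

/-- A preference set of length `n`: a list of length `n` with entries in `{1, …, n}`. -/
def IsPrefSet (n : ℕ) (a : List ℕ) : Prop :=
  a.length = n ∧ ∀ x ∈ a, 1 ≤ x ∧ x ≤ n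

/-- An ordered preference set of length `n`: a nondecreasing preference set. -/
def IsOrderedPrefSet (n : ℕ) (a : List ℕ) : Prop :=
  IsPrefSet n a ∧ a.Pairwise (· ≤ ·)

/-- `op_{n,≥k}`: number of ordered preference sets of length `n` with at least `k` flaws. -/
noncomputable def opGe (n k : ℕ) : ℕ :=
  {a : List ℕ | IsOrderedPrefSet n a ∧ k ≤ flaws n a}.ncard

/-- `op_{n,≤k}`: number of ordered preference sets of length `n` with at most `k` flaws. -/
noncomputable def opLe (n k : ℕ) : ℕ :=
  {a : List ℕ | IsOrderedPrefSet n a ∧ flaws n a ≤ k}.ncard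

/-- `op_{n,k}`: number of ordered preference sets of length `n` with exactly `k` flaws. -/
noncomputable def opEq (n k : ℕ) : ℕ :=
  {a : List ℕ | IsOrderedPrefSet n a ∧ flaws n a = k}.ncard

/-- `op_{n,≥k,≤l}`: at least `k` flaws, every entry at most `l`. -/
noncomputable def opGeLe (n k l : ℕ) : ℕ :=
  {a : List ℕ | IsOrderedPrefSet n a ∧ k ≤ flaws n a ∧ ∀ x ∈ a, x ≤ l}.ncard

/-- `op_{n,≥k,≤l}^m`: at least `k` flaws, every entry at most `l`, leading term `m`. -/
noncomputable def opGeLeLead (n k l m : ℕ) : ℕ :=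
  {a : List ℕ | IsOrderedPrefSet n a ∧ k ≤ flaws n a ∧ (∀ x ∈ a, x ≤ l) ∧
    a.head? = some m}.ncard

/-- `op_{n,k,≤l}^m`: exactly `k` flaws, every entry at most `l`, leading term `m`. -/
noncomputable def opEqLeLead (n k l m : ℕ) : ℕ :=
  {a : List ℕ | IsOrderedPrefSet n a ∧ flaws n a = k ∧ (∀ x ∈ a, x ≤ l) ∧
    a.head? = some m}.ncard

/-- `op_{n,k}^m`: exactly `k` flaws, leading term `m`. -/
noncomputable def opLead (n k m : ℕ) : ℕ :=
  {a : List ℕ | IsOrderedPrefSet n a ∧ flaws n a = k ∧ a.head? = some m}.ncard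

/-- `op_{n,k,=l}^m`: exactly `k` flaws, maximal entry exactly `l`, leading term `m`. -/
noncomputable def opMaxLead (n k l m : ℕ) : ℕ :=
  {a : List ℕ | IsOrderedPrefSet n a ∧ flaws n a = k ∧ (∀ x ∈ a, x ≤ l) ∧ l ∈ a ∧
    a.head? = some m}.ncard

/-- Binomial coefficient `C(a, b)` with an integer lower index, which is `0`
when `b < 0` (the standard convention). -/
def chooseInt (a : ℕ) (b : ℤ) : ℕ := if 0 ≤ b then a.choose b.toNat else 0

lemma find?_range'_eq_some (q : ℕ → Bool) (m : ℕ) :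
    ∀ (b a : ℕ), a ≤ m → m < a + b → q m = true →
    (∀ j, a ≤ j → j < m → q j = false) →
    (List.range' a b).find? q = some m := by
  intro b
  induction b with
  | zero => intro a h1 h2; omega
  | succ b ih =>
    intro a h1 h2 h3 h4
    rw [List.range'_succ, List.find?_cons]
    rcases eq_or_lt_of_le h1 with rfl | hlt
    · simp [h3]
    · rw [h4 a le_rfl hlt]
      exact ih (a+1) hlt (by omega) h3 (fun j hj hj' => h4 j (by omega) hj')

lemma find?_range'_eq_none (q : ℕ → Bool) (b a : ℕ)
    (h : ∀ j, a ≤ j → j < a + b → q j = false) :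
    (List.range' a b).find? q = none := by
  rw [List.find?_eq_none]
  intro x hx
  rw [List.mem_range'_1] at hx
  simp [h x hx.1 hx.2]

/-- simplified parking process for sorted lists: `t` is the maximal occupied spot,
all spots `> t` are free, all free spots `≤ t` are below every preference. -/
def gflaw (n : ℕ) : List ℕ → ℕ → ℕ
  | [], _ => 0
  | p :: r, t => if max p (t+1) ≤ n then gflaw n r (max p (t+1)) else gflaw n r t + 1

/-- final `t` after the simplified process -/
def gpos (n : ℕ) : List ℕ → ℕ → ℕ
  | [], t => t
  | p :: r, t => if max p (t+1) ≤ n then gpos n r (max p (t+1)) else gpos n r t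

lemma firstFree_eq (n : ℕ) (occ : Finset ℕ) (p t : ℕ)
    (hocc : ∀ j ∈ occ, j ≤ t) (hfree : ∀ s, s ≤ t → s ∉ occ → s < p) :
    firstFree n occ p = if max p (t+1) ≤ n then some (max p (t+1)) else none := by
  set m := max p (t+1) with hm
  have hmf : p ≤ m ∧ t + 1 ≤ m ∧ (m = p ∨ m = t + 1) :=
    ⟨le_max_left _ _, le_max_right _ _, max_choice _ _⟩
  have hmem : ∀ j, p ≤ j → j < m → (decide (j ∉ occ)) = false := by
    intro j hj hjm
    by_cases hj' : j ∈ occ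
    · simp [hj']
    · exfalso
      have := hfree j ?_ hj'
      · omega
      · by_contra h
        push_neg at h
        omega
  have hmocc : m ∉ occ := fun h => by have := hocc m h; omega
  split
  · next h =>
    apply find?_range'_eq_some _ _ _ _ (le_max_left _ _) (by omega) (by simp only [decide_eq_true_eq]; exact hmocc) hmem
  · next h =>
    apply find?_range'_eq_none
    intro j hj hj'
    exact hmem j hj (by omega)

lemma flawsFrom_sorted (n : ℕ) :
    ∀ (a : List ℕ) (occ : Finset ℕ) (t : ℕ), a.Pairwise (· ≤ ·) →
    (∀ j ∈ occ, j ≤ t) → (∀ s, s ≤ t → s ∉ occ → ∀ p ∈ a, s < p) →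
    flawsFrom n a occ = gflaw n a t := by
  intro a
  induction a with
  | nil => intro occ t _ _ _; rfl
  | cons p r ih =>
    intro occ t hs hocc hfree
    have hff := firstFree_eq n occ p t hocc
      (fun s hs' hs'' => hfree s hs' hs'' p (List.mem_cons_self))
    rw [List.pairwise_cons] at hs
    by_cases h : max p (t+1) ≤ n
    · rw [if_pos h] at hff
      rw [flawsFrom, hff]
      rw [gflaw, if_pos h]
      apply ih _ (max p (t+1))
      · exact hs.2
      · intro j hj
        simp only [Finset.mem_insert] at hj
        rcases hj with rfl | hj
        · rfl
        · have := hocc j hj; omega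
      · intro s hs1 hs2 x hx
        simp only [Finset.mem_insert, not_or] at hs2
        by_cases hst : s ≤ t
        · exact lt_of_lt_of_le (hfree s hst hs2.2 p (List.mem_cons_self)) (hs.1 x hx)
        · -- t < s ≤ max p (t+1), s ≠ max p (t+1) : so s < p
          have : s < p := by omega
          exact lt_of_lt_of_le this (hs.1 x hx)
    · rw [if_neg h] at hff
      rw [flawsFrom, hff]
      show flawsFrom n r occ + 1 = _
      rw [gflaw, if_neg h]
      congr 1
      apply ih _ t hs.2 hocc
      intro s hs1 hs2 x hx
      exact lt_of_lt_of_le (hfree s hs1 hs2 p (List.mem_cons_self)) (hs.1 x hx)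

lemma gflaw_append (n : ℕ) : ∀ (x y : List ℕ) (t : ℕ),
    gflaw n (x ++ y) t = gflaw n x t + gflaw n y (gpos n x t) := by
  intro x
  induction x with
  | nil => intro y t; simp [gflaw, gpos]
  | cons p r ih =>
    intro y t
    by_cases h : max p (t+1) ≤ n
    · rw [List.cons_append, gflaw, gpos, if_pos h, if_pos h, ih, gflaw, if_pos h]
    · rw [List.cons_append, gflaw, gpos, if_neg h, if_neg h, ih, gflaw, if_neg h]
      omega

lemma gflaw_good (n : ℕ) : ∀ (x : List ℕ) (t : ℕ),
    (∀ i (h : i < x.length), x.get ⟨i, h⟩ ≤ t + 1 + i) → t + x.length ≤ n →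
    gflaw n x t = 0 ∧ gpos n x t = t + x.length := by
  intro x
  induction x with
  | nil => intro t _ _; simp [gflaw, gpos]
  | cons p r ih =>
    intro t hb hn
    have hp : p ≤ t + 1 := by simpa using hb 0 (by simp)
    have hmax : max p (t+1) = t + 1 := by omega
    have h : max p (t+1) ≤ n := by simp only [List.length_cons] at hn; omega
    rw [gflaw, gpos, if_pos h, if_pos h, hmax]
    have := ih (t+1) (fun i hi => by
      have := hb (i+1) (by simpa using Nat.succ_lt_succ hi)
      simpa [Nat.add_comm, Nat.add_assoc, Nat.add_left_comm] using this)
      (by simp only [List.length_cons] at hn; omega)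
    refine ⟨this.1, ?_⟩
    rw [this.2]; simp [List.length_cons]; omega

lemma gflaw_bound (n : ℕ) : ∀ (x : List ℕ) (t : ℕ),
    x.length - (n - t) ≤ gflaw n x t := by
  intro x
  induction x with
  | nil => intro t; simp [gflaw]
  | cons p r ih =>
    intro t
    by_cases h : max p (t+1) ≤ n
    · rw [gflaw, if_pos h]
      have := ih (max p (t+1))
      have h2 : t + 1 ≤ max p (t+1) := le_max_right _ _
      simp only [List.length_cons]
      omega
    · rw [gflaw, if_neg h]
      have := ih t
      simp only [List.length_cons]
      omega

lemma gflaw_all_fail (n : ℕ) : ∀ (y : List ℕ) (t : ℕ), n ≤ t → gflaw n y t = y.length := by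
  intro y
  induction y with
  | nil => intro t _; simp [gflaw]
  | cons p r ih =>
    intro t ht
    have h : ¬ max p (t+1) ≤ n := by
      have := le_max_right p (t+1); omega
    rw [gflaw, if_neg h, ih t ht]
    simp

lemma flaws_eq_gflaw (n k : ℕ) (a : List ℕ) (hs : a.Pairwise (· ≤ ·))
    (hlow : ∀ x ∈ a, k + 1 ≤ x) : flaws n a = gflaw n a k := by
  apply flawsFrom_sorted n a ∅ k hs (by simp)
  intro s hs' hs'' p hp
  have := hlow p hp
  omega

lemma flaws_eq_iff (n k : ℕ) (hkn : k ≤ n) (a : List ℕ)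
    (hlen : a.length = n) (hs : a.Pairwise (· ≤ ·))
    (hlow : ∀ x ∈ a, k + 1 ≤ x) (hhigh : ∀ x ∈ a, x ≤ n) :
    flaws n a = k ↔ ∀ i (h : i < a.length), a.get ⟨i, h⟩ ≤ k + 1 + i := by
  rw [flaws_eq_gflaw n k a hs hlow]
  constructor
  · intro hf
    by_contra hbad
    push_neg at hbad
    -- minimal bad index
    have hex : ∃ i, ∃ (h : i < a.length), k + 1 + i < a.get ⟨i, h⟩ := hbad
    classical
    obtain ⟨i₀, hi₀, hbad₀, hmin⟩ : ∃ i₀, ∃ (h : i₀ < a.length),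
        k + 1 + i₀ < a.get ⟨i₀, h⟩ ∧ ∀ j (hj : j < a.length), j < i₀ →
          a.get ⟨j, hj⟩ ≤ k + 1 + j := by
      obtain ⟨i, hi, hb⟩ := hex
      refine ⟨Nat.find ⟨i, hi, hb⟩ (p := fun i => ∃ (h : i < a.length), k + 1 + i < a.get ⟨i, h⟩), ?_, ?_, ?_⟩
      · obtain ⟨h, _⟩ := Nat.find_spec (⟨i, hi, hb⟩ : ∃ i, ∃ (h : i < a.length), k + 1 + i < a.get ⟨i, h⟩)
        exact h
      · obtain ⟨h, hb'⟩ := Nat.find_spec (⟨i, hi, hb⟩ : ∃ i, ∃ (h : i < a.length), k + 1 + i < a.get ⟨i, h⟩)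
        exact hb'
      · intro j hj hjlt
        have := Nat.find_min (⟨i, hi, hb⟩ : ∃ i, ∃ (h : i < a.length), k + 1 + i < a.get ⟨i, h⟩) hjlt
        push_neg at this
        exact this hj
    set v := a.get ⟨i₀, hi₀⟩ with hv
    have hvn : v ≤ n := hhigh _ (List.get_mem a ⟨i₀, hi₀⟩)
    have hi₀n : k + 2 + i₀ ≤ n := by omega
    -- split a = take i₀ a ++ drop i₀ a
    have hsplit : a = a.take i₀ ++ a.drop i₀ := (List.take_append_drop _ _).symm
    have htlen : (a.take i₀).length = i₀ := by
      rw [List.length_take]; omega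
    have hgood := gflaw_good n (a.take i₀) k (fun i hi => by
        rw [htlen] at hi
        have hgt : (a.take i₀).get ⟨i, by omega⟩ = a.get ⟨i, by omega⟩ := by
          simp
        rw [hgt]
        exact hmin i (by omega) hi) (by omega)
    have hdrop : a.drop i₀ = v :: a.drop (i₀ + 1) := by
      rw [hv, List.get_eq_getElem]
      exact List.drop_eq_getElem_cons hi₀
    rw [hsplit] at hf
    rw [gflaw_append, hgood.1, hgood.2, htlen, hdrop] at hf
    have hsucc : max v (k + i₀ + 1) = v := by omega
    rw [gflaw] at hf
    have : max v (k + i₀ + 1) ≤ n := by omega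
    rw [if_pos this, hsucc] at hf
    have hb := gflaw_bound n (a.drop (i₀ + 1)) v
    have hdl : (a.drop (i₀ + 1)).length = n - (i₀ + 1) := by
      rw [List.length_drop, hlen]
    omega
  · intro hb
    have hsplit : a = a.take (n - k) ++ a.drop (n - k) := (List.take_append_drop _ _).symm
    have htlen : (a.take (n - k)).length = n - k := by
      rw [List.length_take]; omega
    have hgood := gflaw_good n (a.take (n - k)) k (fun i hi => by
        rw [htlen] at hi
        have hgt : (a.take (n - k)).get ⟨i, by omega⟩ = a.get ⟨i, by omega⟩ := by
          simp
        rw [hgt]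
        exact hb i (by omega)) (by omega)
    conv_lhs => rw [hsplit]
    rw [gflaw_append, hgood.1, hgood.2, htlen, gflaw_all_fail n _ _ (by omega),
      List.length_drop, hlen]
    omega

lemma sorted_le_getLast : ∀ (a : List ℕ), a.Pairwise (· ≤ ·) → ∀ {e : ℕ},
    a.getLast? = some e → ∀ x ∈ a, x ≤ e := by
  intro a
  induction a with
  | nil => simp
  | cons p r ih =>
    intro hs e he x hx
    rw [List.pairwise_cons] at hs
    cases r with
    | nil =>
      simp only [List.getLast?_singleton, Option.some.injEq] at he
      simp only [List.mem_singleton] at hx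
      omega
    | cons q r' =>
      rw [List.getLast?_cons_cons] at he
      have hemem : e ∈ q :: r' := by
        have := List.getLast?_eq_getLast_of_ne_nil (l := q :: r') (by simp)
        rw [this] at he
        simp only [Option.some.injEq] at he
        rw [← he]
        exact List.getLast_mem _
      rcases List.mem_cons.mp hx with rfl | hx'
      · exact hs.1 e hemem
      · exact ih hs.2 he x hx'

lemma sorted_head_le {a : List ℕ} (hs : a.Pairwise (· ≤ ·)) {m : ℕ}
    (hm : a.head? = some m) : ∀ x ∈ a, m ≤ x := by
  cases a with
  | nil => simp
  | cons p r =>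
    simp only [List.head?_cons, Option.some.injEq] at hm
    subst hm
    rw [List.pairwise_cons] at hs
    intro x hx
    rcases List.mem_cons.mp hx with rfl | hx'
    · exact le_rfl
    · exact hs.1 x hx'

/-- The sets we count: sorted lists of length `p`, entries at least `k+1`,
`i`-th entry at most `k+1+i`, last entry `e`. -/
def Pset (k p e : ℕ) : Set (List ℕ) :=
  {a | a.length = p ∧ a.Pairwise (· ≤ ·) ∧ (∀ x ∈ a, k + 1 ≤ x) ∧
    (∀ i (h : i < a.length), a[i] ≤ k + 1 + i) ∧ a.getLast? = some e}

lemma opMaxLead_set_eq (n k l : ℕ) (hl : k + 1 ≤ l) (hn : l ≤ n) :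
    {a : List ℕ | IsOrderedPrefSet n a ∧ flaws n a = k ∧ (∀ x ∈ a, x ≤ l) ∧ l ∈ a ∧
      a.head? = some (k + 1)} = Pset k n l := by
  ext a
  simp only [Set.mem_setOf_eq, Pset, IsOrderedPrefSet, IsPrefSet]
  constructor
  · rintro ⟨⟨⟨hlen, hent⟩, hs⟩, hfl, hle, hlmem, hhead⟩
    have hlow : ∀ x ∈ a, k + 1 ≤ x := sorted_head_le hs hhead
    have hne : a ≠ [] := List.ne_nil_of_mem hlmem
    have hlast : a.getLast? = some (a.getLast hne) :=
      List.getLast?_eq_getLast_of_ne_nil hne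
    have hgl : a.getLast hne = l := by
      have h1 : a.getLast hne ≤ l := hle _ (List.getLast_mem hne)
      have h2 : l ≤ a.getLast hne := sorted_le_getLast a hs hlast l hlmem
      omega
    refine ⟨hlen, hs, hlow, ?_, by rw [hlast, hgl]⟩
    have := (flaws_eq_iff n k (by omega) a hlen hs hlow
      (fun x hx => le_trans (hle x hx) hn)).mp hfl
    intro i h
    simpa using this i h
  · rintro ⟨hlen, hs, hlow, hget, hlast⟩
    have hne : a ≠ [] := by
      rintro rfl
      simp at hlast
    have hle : ∀ x ∈ a, x ≤ l := sorted_le_getLast a hs hlast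
    have hlmem : l ∈ a := by
      have := List.getLast?_eq_getLast_of_ne_nil hne
      rw [this] at hlast
      simp only [Option.some.injEq] at hlast
      rw [← hlast]
      exact List.getLast_mem hne
    have hhead : a.head? = some (k + 1) := by
      cases a with
      | nil => exact absurd rfl hne
      | cons p r =>
        have h1 : k + 1 ≤ p := hlow p (List.mem_cons_self)
        have h2 : p ≤ k + 1 := by exact hget 0 (by simp)
        simp only [List.head?_cons, Option.some.injEq]
        omega
    refine ⟨⟨⟨hlen, fun x hx => ⟨by have := hlow x hx; omega,
      le_trans (hle x hx) hn⟩⟩, hs⟩, ?_, hle, hlmem, hhead⟩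
    refine (flaws_eq_iff n k (by omega) a hlen hs hlow
      (fun x hx => le_trans (hle x hx) hn)).mpr ?_
    intro i h
    simpa using hget i h

lemma Pset_finite (k p e : ℕ) : (Pset k p e).Finite := by
  have hsub : Pset k p e ⊆ Set.range
      (fun f : Fin p → Fin (k + p + 1) => List.ofFn (fun i => (f i : ℕ))) := by
    rintro a ⟨hlen, hs, hlow, hget, hlast⟩
    refine ⟨fun i => ⟨a[(i : ℕ)]'(by omega), ?_⟩, ?_⟩
    · have := hget i (by omega)
      have hi : (i : ℕ) < p := i.2
      omega
    · apply List.ext_get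
      · simp [hlen]
      · intro i h1 h2
        simp
  exact Set.Finite.subset (Set.finite_range _) hsub

lemma Pset_base (k p : ℕ) (hp : 1 ≤ p) : Pset k p (k + 1) = {List.replicate p (k + 1)} := by
  ext a
  simp only [Set.mem_singleton_iff]
  constructor
  · rintro ⟨hlen, hs, hlow, hget, hlast⟩
    rw [List.eq_replicate_iff]
    refine ⟨hlen, fun x hx => ?_⟩
    have h1 := hlow x hx
    have h2 := sorted_le_getLast a hs hlast x hx
    omega
  · rintro rfl
    obtain ⟨m, rfl⟩ : ∃ m, p = m + 1 := ⟨p - 1, by omega⟩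
    refine ⟨by simp, ?_, ?_, ?_, ?_⟩
    · exact List.pairwise_replicate.mpr (Or.inr le_rfl)
    · intro x hx
      rw [List.eq_of_mem_replicate hx]
    · intro i h
      rw [List.getElem_replicate]
      omega
    · rw [List.replicate_succ']
      exact List.getLast?_concat

lemma concat_mem_Pset {k p j v : ℕ} {b : List ℕ} (hb : b ∈ Pset k p j)
    (hjv : j ≤ v) (hvb : v ≤ k + 1 + p) : b ++ [v] ∈ Pset k (p + 1) v := by
  obtain ⟨hlen, hs, hlow, hget, hlast⟩ := hb
  have hble : ∀ x ∈ b, x ≤ v := fun x hx => le_trans (sorted_le_getLast b hs hlast x hx) hjv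
  have hjk : k + 1 ≤ j := hlow j (by
    have := List.dropLast_append_getLast? j hlast
    rw [← this]; simp)
  refine ⟨by simp [hlen], ?_, ?_, ?_, List.getLast?_concat⟩
  · rw [List.pairwise_append]
    exact ⟨hs, List.pairwise_singleton _ _, fun x hx y hy => by
      rw [List.mem_singleton] at hy; subst hy; exact hble x hx⟩
  · intro x hx
    rw [List.mem_append] at hx
    rcases hx with hx | hx
    · exact hlow x hx
    · rw [List.mem_singleton] at hx; omega
  · intro i h
    have h' : i < p + 1 := by simpa [hlen] using h
    by_cases hip : i < p
    · rw [List.getElem_append_left (by omega)]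
      exact hget i (by omega)
    · have hip' : i = p := by omega
      subst hip'
      rw [List.getElem_append_right (by omega)]
      simpa [hlen] using hvb

lemma dropLast_mem_Pset {k p e j : ℕ} {a : List ℕ} (ha : a ∈ Pset k (p + 1) e)
    (hj : a.dropLast.getLast? = some j) : a.dropLast ∈ Pset k p j := by
  obtain ⟨hlen, hs, hlow, hget, hlast⟩ := ha
  refine ⟨by simp [hlen], hs.sublist (List.dropLast_sublist a), ?_, ?_, hj⟩
  · exact fun x hx => hlow x (List.dropLast_sublist a |>.mem hx)
  · intro i h
    have h' : i < a.dropLast.length := h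
    rw [List.getElem_dropLast]
    exact hget i (by simp [List.length_dropLast, hlen] at h'; omega)

lemma Pset_last_le {k p e : ℕ} {b : List ℕ} (hb : b ∈ Pset k p e) :
    1 ≤ p ∧ e ≤ k + p := by
  obtain ⟨hlen, hs, hlow, hget, hlast⟩ := hb
  have hbe : b.dropLast ++ [e] = b := List.dropLast_append_getLast? e hlast
  have hne : b ≠ [] := by rintro rfl; simp at hlast
  have hp : 1 ≤ p := by
    rw [← hlen]
    cases b
    · exact absurd rfl hne
    · simp
  have hg : b.getLast hne = e := by
    have h2 := hlast
    rw [List.getLast?_eq_getLast_of_ne_nil hne] at h2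
    simpa using h2
  have hlp : 1 ≤ b.length := List.length_pos_iff.mpr hne
  have h3 : b.getLast hne ≤ k + 1 + (b.length - 1) := by
    rw [List.getLast_eq_getElem]
    exact hget (b.length - 1) (by omega)
  omega

def Xset (k p e : ℕ) : Set (List ℕ) := {a ∈ Pset k p e | ∀ x ∈ a.dropLast, x < e}
def Yset (k p e : ℕ) : Set (List ℕ) := {a ∈ Pset k p e | e ∈ a.dropLast}

lemma Pset_eq_union (k p e : ℕ) : Pset k p e = Xset k p e ∪ Yset k p e := by
  ext a
  simp only [Xset, Yset, Set.mem_union, Set.mem_setOf_eq]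
  constructor
  · intro ha
    by_cases h : ∀ x ∈ a.dropLast, x < e
    · exact Or.inl ⟨ha, h⟩
    · push_neg at h
      obtain ⟨x, hx, hxe⟩ := h
      have hxa : x ∈ a := (List.dropLast_sublist a).mem hx
      have : x ≤ e := sorted_le_getLast a ha.2.1 ha.2.2.2.2 x hxa
      have : x = e := by omega
      exact Or.inr ⟨ha, this ▸ hx⟩
  · rintro (⟨ha, _⟩ | ⟨ha, _⟩) <;> exact ha

lemma XY_disjoint (k p e : ℕ) : Disjoint (Xset k p e) (Yset k p e) := by
  rw [Set.disjoint_left]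
  rintro a ⟨_, hX⟩ ⟨_, hY⟩
  exact absurd rfl (Nat.ne_of_lt (hX e hY))

lemma Yset_top_empty (k p : ℕ) : Yset k (p + 1) (k + p + 1) = ∅ := by
  ext a
  simp only [Yset, Set.mem_setOf_eq, Set.mem_empty_iff_false, iff_false, not_and]
  rintro ⟨hlen, hs, hlow, hget, hlast⟩ hmem
  obtain ⟨i, hi, hie⟩ := List.getElem_of_mem hmem
  rw [List.getElem_dropLast] at hie
  have hi' : i < a.dropLast.length := hi
  rw [List.length_dropLast, hlen] at hi'
  have := hget i (by omega)
  omega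

lemma bijOn_X (k p e : ℕ) (hp : 1 ≤ p) (he1 : k + 2 ≤ e) (he2 : e ≤ k + 1 + p) :
    Set.BijOn (fun a => a.dropLast ++ [e - 1]) (Xset k (p + 1) e) (Pset k (p + 1) (e - 1)) := by
  have hkey : ∀ a ∈ Xset k (p + 1) e, ∃ j, a.dropLast.getLast? = some j ∧ j < e ∧
      a.dropLast ∈ Pset k p j := by
    rintro a ⟨ha, hX⟩
    have hlen := ha.1
    have hdne : a.dropLast ≠ [] := by
      have : a.dropLast.length = p := by rw [List.length_dropLast, hlen]; omega
      intro h; rw [h] at this; simp at this; omega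
    have hj : a.dropLast.getLast? = some (a.dropLast.getLast hdne) :=
      List.getLast?_eq_getLast_of_ne_nil hdne
    refine ⟨_, hj, hX _ (List.getLast_mem hdne), dropLast_mem_Pset ha hj⟩
  constructor
  · intro a haX
    obtain ⟨j, hj, hje, hdP⟩ := hkey a haX
    exact concat_mem_Pset hdP (by omega) (by omega)
  constructor
  · intro a haX b hbX heq
    simp only [List.append_left_inj] at heq
    obtain ⟨haP, _⟩ := haX
    obtain ⟨hbP, _⟩ := hbX
    rw [← List.dropLast_append_getLast? e haP.2.2.2.2,
      ← List.dropLast_append_getLast? e hbP.2.2.2.2, heq]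
  · intro b hbP
    have hlenb := hbP.1
    have hdne : b.dropLast ≠ [] := by
      have : b.dropLast.length = p := by rw [List.length_dropLast, hlenb]; omega
      intro h; rw [h] at this; simp at this; omega
    have hj : b.dropLast.getLast? = some (b.dropLast.getLast hdne) :=
      List.getLast?_eq_getLast_of_ne_nil hdne
    have hdP : b.dropLast ∈ Pset k p (b.dropLast.getLast hdne) := dropLast_mem_Pset hbP hj
    have hjle : b.dropLast.getLast hdne ≤ e - 1 :=
      sorted_le_getLast b hbP.2.1 hbP.2.2.2.2 _ ((List.dropLast_sublist b).mem (List.getLast_mem hdne))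
    refine ⟨b.dropLast ++ [e], ⟨concat_mem_Pset hdP (by omega) (by omega), ?_⟩, ?_⟩
    · intro x hx
      rw [List.dropLast_concat] at hx
      have := sorted_le_getLast b hbP.2.1 hbP.2.2.2.2 x ((List.dropLast_sublist b).mem hx)
      omega
    · show (b.dropLast ++ [e]).dropLast ++ [e - 1] = b
      rw [List.dropLast_concat]
      exact List.dropLast_append_getLast? (e - 1) hbP.2.2.2.2

lemma bijOn_Y (k p e : ℕ) (hp : 1 ≤ p) :
    Set.BijOn (fun a => a.dropLast) (Yset k (p + 1) e) (Pset k p e) := by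
  constructor
  · rintro a ⟨ha, hY⟩
    have hdne : a.dropLast ≠ [] := List.ne_nil_of_mem hY
    have hj : a.dropLast.getLast? = some (a.dropLast.getLast hdne) :=
      List.getLast?_eq_getLast_of_ne_nil hdne
    have h1 : a.dropLast.getLast hdne ≤ e :=
      sorted_le_getLast a ha.2.1 ha.2.2.2.2 _ ((List.dropLast_sublist a).mem (List.getLast_mem hdne))
    have h2 : e ≤ a.dropLast.getLast hdne := by
      apply sorted_le_getLast a.dropLast (ha.2.1.sublist (List.dropLast_sublist a)) hj e hY
    have : a.dropLast.getLast hdne = e := by omega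
    rw [← this]
    exact dropLast_mem_Pset ha hj
  constructor
  · rintro a ⟨haP, _⟩ b ⟨hbP, _⟩ heq
    simp only at heq
    rw [← List.dropLast_append_getLast? e haP.2.2.2.2,
      ← List.dropLast_append_getLast? e hbP.2.2.2.2, heq]
  · intro b hbP
    have hble := Pset_last_le hbP
    refine ⟨b ++ [e], ⟨concat_mem_Pset hbP le_rfl (by omega), ?_⟩, ?_⟩
    · rw [List.dropLast_concat]
      have hbne : b ≠ [] := by
        rintro rfl
        have := hbP.2.2.2.2
        simp at this
      have heq : b.getLast hbne = e := by
        have h2 := hbP.2.2.2.2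
        rw [List.getLast?_eq_getLast_of_ne_nil hbne] at h2
        simpa using h2
      rw [← heq]
      exact List.getLast_mem hbne
    · show (b ++ [e]).dropLast = b
      exact List.dropLast_concat

lemma Xfin (k p e : ℕ) : (Xset k p e).Finite :=
  (Pset_finite k p e).subset (fun a ha => ha.1)

lemma Yfin (k p e : ℕ) : (Yset k p e).Finite :=
  (Pset_finite k p e).subset (fun a ha => ha.1)

lemma ncard_X (k p e : ℕ) (hp : 1 ≤ p) (he1 : k + 2 ≤ e) (he2 : e ≤ k + 1 + p) :
    (Xset k (p + 1) e).ncard = (Pset k (p + 1) (e - 1)).ncard := by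
  rw [← (bijOn_X k p e hp he1 he2).image_eq]
  exact (Set.ncard_image_of_injOn (bijOn_X k p e hp he1 he2).injOn).symm

lemma ncard_Y (k p e : ℕ) (hp : 1 ≤ p) :
    (Yset k (p + 1) e).ncard = (Pset k p e).ncard := by
  rw [← (bijOn_Y k p e hp).image_eq]
  exact (Set.ncard_image_of_injOn (bijOn_Y k p e hp).injOn).symm

lemma Pset_ncard_rec (k p e : ℕ) (hp : 1 ≤ p) (he1 : k + 2 ≤ e) (he2 : e ≤ k + p) :
    (Pset k (p + 1) e).ncard = (Pset k (p + 1) (e - 1)).ncard + (Pset k p e).ncard := by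
  rw [Pset_eq_union k (p + 1) e,
    Set.ncard_union_eq (XY_disjoint k (p + 1) e) (Xfin k (p + 1) e) (Yfin k (p + 1) e),
    ncard_X k p e hp he1 (by omega), ncard_Y k p e hp]

lemma Pset_ncard_top (k p : ℕ) (hp : 1 ≤ p) :
    (Pset k (p + 1) (k + p + 1)).ncard = (Pset k (p + 1) (k + p)).ncard := by
  rw [Pset_eq_union k (p + 1) (k + p + 1), Yset_top_empty, Set.union_empty,
    ncard_X k p (k + p + 1) hp (by omega) (by omega), Nat.add_sub_cancel]

lemma Pset_ncard_base (k p : ℕ) (hp : 1 ≤ p) : (Pset k p (k + 1)).ncard = 1 := by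
  rw [Pset_base k p hp, Set.ncard_singleton]

lemma ch1 (M q : ℕ) (hq : 1 ≤ q) (hqM : q ≤ M) :
    M * Nat.choose (M - 1) (q - 1) = q * Nat.choose M q := by
  have h := Nat.add_one_mul_choose_eq (M - 1) (q - 1)
  have h1 : M - 1 + 1 = M := by omega
  have h2 : q - 1 + 1 = q := by omega
  rw [h1, h2] at h
  rw [h]
  ring

lemma ch2 (M q : ℕ) (hq : q + 1 ≤ M) :
    M * Nat.choose (M - 1) q = (M - q) * Nat.choose M q := by
  have hs1 : Nat.choose (M - 1) q = Nat.choose (M - 1) (M - 1 - q) :=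
    (Nat.choose_symm (by omega)).symm
  have h := ch1 M (M - q) (by omega) (by omega)
  have he : M - q - 1 = M - 1 - q := by omega
  have hs2 : Nat.choose M (M - q) = Nat.choose M q := Nat.choose_symm (by omega)
  rw [he, hs2] at h
  rw [hs1, h]

lemma main_count (k : ℕ) : ∀ s q d, 1 ≤ d → 2 * q + d = s →
    (2 * q + d) * (Pset k (q + d) (k + 1 + q)).ncard = d * Nat.choose (2 * q + d) q := by
  intro s
  induction s using Nat.strong_induction_on with
  | _ s ih =>
    intro q d hd hs
    match q, hd with
    | 0, hd =>
      simp only [Nat.mul_zero, Nat.zero_add, Nat.add_zero, Nat.zero_le, Nat.choose_zero_right,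
        Nat.mul_one]
      rw [Pset_ncard_base k d hd]
      simp
    | q + 1, hd =>
      rcases Nat.lt_or_ge d 2 with hd2 | hd2
      · -- d = 1
        have hd1 : d = 1 := by omega
        subst hd1
        have htop : (Pset k (q + 1 + 1) (k + (q + 1) + 1)).ncard
            = (Pset k (q + 1 + 1) (k + (q + 1))).ncard := Pset_ncard_top k (q + 1) (by omega)
        have hih := ih (s - 1) (by omega) q 2 (by omega) (by omega)
        set A := (Pset k (q + 2) (k + 1 + q)).ncard with hA
        have hEq1 : (Pset k (q + 1 + 1) (k + 1 + (q + 1))).ncard = A := by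
          rw [hA]
          have e1 : k + 1 + (q + 1) = k + (q + 1) + 1 := by omega
          have e2 : k + (q + 1) = k + 1 + q := by omega
          rw [e1, htop, e2]
        have hEq2 : (Pset k (q + 2) (k + 1 + q)).ncard = A := rfl
        rw [hEq1]
        -- hih : (2*q+2) * A' = 2 * C(2*q+2, q) where A' = Pset k (q+2) (k+1+q)
        have hq2 : q + 2 = q + 1 + 1 := by omega
        rw [(show 2 * q + 2 = 2 * (q + 1) by omega)] at hih
        -- cancel
        have hcan : (2 * (q + 1)) * ((2 * (q + 1) + 1) * A)
            = (2 * (q + 1)) * (1 * Nat.choose (2 * (q + 1) + 1) (q + 1)) := by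
          have hch := ch1 (2 * (q + 1) + 1) (q + 1) (by omega) (by omega)
          -- hch : (2(q+1)+1) * C(2(q+1), q) = (q+1) * C(2(q+1)+1, q+1)
          have hred : 2 * (q + 1) + 1 - 1 = 2 * (q + 1) := by omega
          have hred2 : q + 1 - 1 = q := by omega
          rw [hred, hred2] at hch
          calc (2 * (q + 1)) * ((2 * (q + 1) + 1) * A)
              = (2 * (q + 1) + 1) * ((2 * (q + 1)) * A) := by ring
            _ = (2 * (q + 1) + 1) * (2 * Nat.choose (2 * (q + 1)) q) := by rw [hih]
            _ = 2 * ((2 * (q + 1) + 1) * Nat.choose (2 * (q + 1)) q) := by ring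
            _ = 2 * ((q + 1) * Nat.choose (2 * (q + 1) + 1) (q + 1)) := by rw [hch]
            _ = (2 * (q + 1)) * (1 * Nat.choose (2 * (q + 1) + 1) (q + 1)) := by ring
        exact Nat.eq_of_mul_eq_mul_left (by omega) hcan
      · -- d ≥ 2
        set M := 2 * (q + 1) + d with hM
        have hrec := Pset_ncard_rec k (q + 1 + d - 1) (k + 1 + (q + 1)) (by omega)
          (by omega) (by omega)
        have hp1 : q + 1 + d - 1 + 1 = q + 1 + d := by omega
        rw [hp1] at hrec
        have hA1e : k + 1 + (q + 1) - 1 = k + 1 + q := by omega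
        rw [hA1e] at hrec
        -- A1 = Pset k (q+1+d) (k+1+q) : params (q, d+1)
        have hih1 := ih (s - 1) (by omega) q (d + 1) (by omega) (by omega)
        have hg1 : q + (d + 1) = q + 1 + d := by omega
        rw [hg1] at hih1
        -- hih1 : (2q + d + 1) * ncard (Pset k (q+1+d) (k+1+q)) = (d+1) * C(2q+d+1, q)
        have hih2 := ih (s - 1) (by omega) (q + 1) (d - 1) (by omega) (by omega)
        have hg2 : q + 1 + (d - 1) = q + 1 + d - 1 := by omega
        have hg3 : 2 * (q + 1) + (d - 1) = M - 1 := by omega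
        rw [hg2, hg3] at hih2
        -- hih2 : (M-1) * ncard (Pset k (q+1+d-1) (k+1+(q+1))) = (d-1) * C(M-1, q+1)
        have hMq : 2 * q + (d + 1) = M - 1 := by omega
        rw [hMq] at hih1
        set A1 := (Pset k (q + 1 + d) (k + 1 + q)).ncard
        set A2 := (Pset k (q + 1 + d - 1) (k + 1 + (q + 1))).ncard
        rw [hrec]
        have hch1 := ch1 M (q + 1) (by omega) (by omega)
        rw [Nat.add_sub_cancel] at hch1
        have hch2 := ch2 M (q + 1) (by omega)
        have hMsub : M - (q + 1) = q + 1 + d := by omega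
        rw [hMsub] at hch2
        have hcan : (M - 1) * (M * (A1 + A2)) = (M - 1) * (d * Nat.choose M (q + 1)) := by
          calc (M - 1) * (M * (A1 + A2))
              = M * ((M - 1) * A1) + M * ((M - 1) * A2) := by ring
            _ = M * ((d + 1) * Nat.choose (M - 1) q) + M * ((d - 1) * Nat.choose (M - 1) (q + 1)) := by
                rw [hih1, hih2]
            _ = (d + 1) * (M * Nat.choose (M - 1) q) + (d - 1) * (M * Nat.choose (M - 1) (q + 1)) := by
                ring
            _ = (d + 1) * ((q + 1) * Nat.choose M (q + 1))
                + (d - 1) * ((q + 1 + d) * Nat.choose M (q + 1)) := by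
                rw [hch1, hch2]
            _ = (M - 1) * (d * Nat.choose M (q + 1)) := by
                have : (d + 1) * (q + 1) + (d - 1) * (q + 1 + d) = (M - 1) * d := by
                  cases' Nat.exists_eq_add_of_le hd2 with d' hd'
                  subst hd'
                  rw [(show 2 + d' - 1 = d' + 1 by omega), (show M - 1 = 2 * q + d' + 3 by omega)]
                  ring
                calc (d + 1) * ((q + 1) * Nat.choose M (q + 1))
                    + (d - 1) * ((q + 1 + d) * Nat.choose M (q + 1))
                    = ((d + 1) * (q + 1) + (d - 1) * (q + 1 + d)) * Nat.choose M (q + 1) := by ring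
                  _ = ((M - 1) * d) * Nat.choose M (q + 1) := by rw [this]
                  _ = (M - 1) * (d * Nat.choose M (q + 1)) := by ring
        exact Nat.eq_of_mul_eq_mul_left (by omega) hcan

theorem stmt12 (n k l : ℕ) (hl : k + 1 ≤ l) (hn : l ≤ n) :
    (n + l - k - 1) * opMaxLead n k l (k + 1)
      = (n - l + k + 1) * Nat.choose (n + l - k - 1) (l - k - 1) := by
  have hset : opMaxLead n k l (k + 1) = (Pset k n l).ncard := by
    unfold opMaxLead
    rw [opMaxLead_set_eq n k l hl hn]
  rw [hset]
  have h := main_count k (2 * (l - k - 1) + (n - l + k + 1)) (l - k - 1) (n - l + k + 1)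
    (by omega) rfl
  have e1 : (l - k - 1) + (n - l + k + 1) = n := by omega
  have e2 : 2 * (l - k - 1) + (n - l + k + 1) = n + l - k - 1 := by omega
  have e3 : k + 1 + (l - k - 1) = l := by omega
  rw [e1, e2, e3] at h
  exact h
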